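/- Let f be a δ-Partitionable fractional perfect matching of G, and let f' be a fractional perfect matching of G equivalent to f with E(f') ⊆ E(f). Then f' is δ-Partitionable. -/

import Mathlib

open Finset
open scoped Classical

variable {V : Type*} [Fintype V] [DecidableEq V]

/-- The sum of `f` over the edges (elements of `Sym2 V`) containing the vertex `v`. -/
noncomputable def fracDeg (f : Sym2 V → ℝ) (v : V) : ℝ :=
  ∑ e ∈ Finset.univ.filter (fun e : Sym2 V => v ∈ e), f e

/-- `f` is a fractional matching of `G`. -/
def IsFracMatching (G : SimpleGraph V) (f : Sym2 V → ℝ) : Prop :=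
  (∀ e, 0 ≤ f e ∧ f e ≤ 1) ∧ (∀ e, e ∉ G.edgeSet → f e = 0) ∧ ∀ v, fracDeg f v ≤ 1

/-- `f` is a fractional perfect matching of `G`. -/
def IsFPM (G : SimpleGraph V) (f : Sym2 V → ℝ) : Prop :=
  (∀ e, 0 ≤ f e ∧ f e ≤ 1) ∧ (∀ e, e ∉ G.edgeSet → f e = 0) ∧ ∀ v, fracDeg f v = 1

/-- `E(f)`: the set of edges with positive weight. -/
noncomputable def fSupp (f : Sym2 V → ℝ) : Finset (Sym2 V) :=
  Finset.univ.filter (fun e => 0 < f e)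

/-- Number of edges of `F` containing `v` (the degree of `v` in the subgraph with edge set `F`). -/
noncomputable def edgeDeg (F : Finset (Sym2 V)) (v : V) : ℕ :=
  (F.filter (fun e => v ∈ e)).card

/-- The set of vertices incident to some edge of `F`. -/
noncomputable def vertSet (F : Finset (Sym2 V)) : Finset V :=
  Finset.univ.filter (fun v => ∃ e ∈ F, v ∈ e)

/-- Two edge-weight functions are equivalent: same incident sums at every vertex. -/
def Equiv' (f f' : Sym2 V → ℝ) : Prop := ∀ v : V, fracDeg f v = fracDeg f' v

/-- `F` consists of a single edge. -/
def IsSingleEdge (F : Finset (Sym2 V)) : Prop := ∃ e : Sym2 V, F = {e}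

/-- `F` is the edge set of an odd cycle. -/
def IsOddCycleSet (F : Finset (Sym2 V)) : Prop :=
  ∃ (v : V) (c : (SimpleGraph.fromEdgeSet (↑F : Set (Sym2 V))).Walk v v),
    c.IsCycle ∧ Odd c.length ∧ c.edges.toFinset = F

/-- Two edge sets are vertex-disjoint. -/
def VDisj (F F' : Finset (Sym2 V)) : Prop :=
  ∀ v : V, (∃ e ∈ F, v ∈ e) → ¬ ∃ e ∈ F', v ∈ e

/-- Every connected component of the subgraph with edge set `F` (ignoring isolated
vertices) is either a single edge or an odd cycle, expressed via a partition of `F`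
into pairwise vertex-disjoint such pieces. -/
def EdgesAndOddCycles (F : Finset (Sym2 V)) : Prop :=
  ∃ P : Finset (Finset (Sym2 V)),
    (∀ A ∈ P, IsSingleEdge A ∨ IsOddCycleSet A) ∧
    (∀ A ∈ P, ∀ B ∈ P, A ≠ B → VDisj A B) ∧
    P.biUnion id = F

/-- The family `P` witnesses that `f` is a `δ`-Partitionable fractional perfect matching. -/
def IsPartitionWitness (f : Sym2 V → ℝ) (δ : ℕ) (P : Fin δ → Finset (Sym2 V)) : Prop :=
  (∀ j, (P j).Nonempty) ∧
  (∀ j k, j ≠ k → VDisj (P j) (P k)) ∧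
  (∀ j, P j ⊆ fSupp f) ∧
  (∀ e ∈ fSupp f, ∃ j, e ∈ P j) ∧
  ∀ j, ∑ e ∈ P j, f e = (Fintype.card V : ℝ) / (2 * δ)

/-- `f` is `δ`-Partitionable. -/
def IsDeltaPartitionable (f : Sym2 V → ℝ) (δ : ℕ) : Prop :=
  ∃ P : Fin δ → Finset (Sym2 V), IsPartitionWitness f δ P

lemma sum_fracDeg_eq_aux (S : Finset V) (g : Sym2 V → ℝ) :
    ∑ v ∈ S, fracDeg g v = ∑ e : Sym2 V, ((S.filter (· ∈ e)).card : ℝ) * g e := by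
  unfold fracDeg
  simp_rw [Finset.sum_filter]
  rw [Finset.sum_comm]
  refine Finset.sum_congr rfl fun e _ => ?_
  rw [← Finset.sum_filter, Finset.sum_const, nsmul_eq_mul]

lemma sum_part_eq (G : SimpleGraph V) (f : Sym2 V → ℝ) (hf : IsFPM G f)
    (δ : ℕ) (P : Fin δ → Finset (Sym2 V)) (hP : IsPartitionWitness f δ P)
    (j : Fin δ) (g : Sym2 V → ℝ) (hg0 : ∀ e, 0 ≤ g e) (hgs : fSupp g ⊆ fSupp f) :
    ∑ v ∈ vertSet (P j), fracDeg g v = 2 * ∑ e ∈ P j, g e := by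
  obtain ⟨hne, hdisj, hsubP, hcov, hsum⟩ := hP
  rw [sum_fracDeg_eq_aux]
  rw [← Finset.sum_subset (Finset.subset_univ (P j))
    (f := fun e => (((vertSet (P j)).filter (· ∈ e)).card : ℝ) * g e)]
  · rw [Finset.mul_sum]
    refine Finset.sum_congr rfl fun e he => ?_
    have hef : e ∈ fSupp f := hsubP j he
    have hedge : e ∈ G.edgeSet := by
      by_contra h
      have := hf.2.1 e h
      simp [fSupp, this] at hef
    have hndiag : ¬ e.IsDiag := G.not_isDiag_of_mem_edgeSet hedge
    obtain ⟨a, b⟩ := e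
    have hab : a ≠ b := by simpa [Sym2.isDiag_iff_proj_eq] using hndiag
    have hfa : a ∈ vertSet (P j) := by
      simp only [vertSet, Finset.mem_filter, Finset.mem_univ, true_and]
      exact ⟨_, he, by simp⟩
    have hfb : b ∈ vertSet (P j) := by
      simp only [vertSet, Finset.mem_filter, Finset.mem_univ, true_and]
      exact ⟨_, he, by simp⟩
    have hset : (vertSet (P j)).filter (· ∈ s(a, b)) = {a, b} := by
      ext v
      simp only [Finset.mem_filter, Sym2.mem_iff, Finset.mem_insert, Finset.mem_singleton]
      constructor
      · rintro ⟨-, h | h⟩ <;> simp [h]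
      · rintro (rfl | rfl) <;> simp [hfa, hfb]
    rw [hset, Finset.card_insert_of_notMem (by simpa using hab), Finset.card_singleton]
    norm_num
  · intro e _ he
    rcases eq_or_lt_of_le (hg0 e) with h | h
    · rw [← h, mul_zero]
    · have heg : e ∈ fSupp g := by simp [fSupp, h]
      obtain ⟨k, hk⟩ := hcov e (hgs heg)
      have hjk : j ≠ k := fun h' => he (h' ▸ hk)
      suffices h0 : ((vertSet (P j)).filter (· ∈ e)).card = 0 by rw [h0]; norm_num
      rw [Finset.card_eq_zero, Finset.filter_eq_empty_iff]
      intro v hv hve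
      simp only [vertSet, Finset.mem_filter, Finset.mem_univ, true_and] at hv
      exact hdisj j k hjk v hv ⟨e, hk, hve⟩

/-- if `f` is a `δ`-Partitionable fractional perfect matching and `f'` is an
equivalent fractional perfect matching with `E(f') ⊆ E(f)`, then `f'` is
`δ`-Partitionable. -/
theorem equiv_preserves_partitionable (G : SimpleGraph V) (hG : ∀ v : V, ∃ u, G.Adj u v)
    (δ : ℕ) (hδ : 1 ≤ δ) (f f' : Sym2 V → ℝ)
    (hf : IsFPM G f) (hpart : IsDeltaPartitionable f δ)
    (hf' : IsFPM G f') (hsub : fSupp f' ⊆ fSupp f) (hequiv : Equiv' f f') :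
    IsDeltaPartitionable f' δ  := by
  obtain ⟨P, hP⟩ := hpart
  have hP' := hP
  obtain ⟨hne, hdisj, hsubP, hcov, hsum⟩ := hP'
  -- sums over P j agree for f and f'
  have hsum' : ∀ j, ∑ e ∈ P j, f' e = (Fintype.card V : ℝ) / (2 * δ) := by
    intro j
    have h1 := sum_part_eq G f hf δ P hP j f (fun e => (hf.1 e).1) le_rfl
    have h2 := sum_part_eq G f hf δ P hP j f' (fun e => (hf'.1 e).1) hsub
    have h3 : ∑ v ∈ vertSet (P j), fracDeg f v = ∑ v ∈ vertSet (P j), fracDeg f' v :=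
      Finset.sum_congr rfl fun v _ => hequiv v
    have : (2 : ℝ) * ∑ e ∈ P j, f' e = 2 * ∑ e ∈ P j, f e := by
      rw [← h1, ← h2, h3]
    have h4 : ∑ e ∈ P j, f' e = ∑ e ∈ P j, f e := by linarith
    rw [h4, hsum j]
  -- the new partition
  refine ⟨fun j => (P j).filter (fun e => 0 < f' e), ?_, ?_, ?_, ?_, ?_⟩
  · intro j
    -- sum over P j of f' is positive since P j nonempty with positive f on it... need c > 0
    have hcpos : (0 : ℝ) < (Fintype.card V : ℝ) / (2 * δ) := by
      have hc := hsum j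
      have hpos : (0 : ℝ) < ∑ e ∈ P j, f e := by
        refine Finset.sum_pos (fun e he => ?_) (hne j)
        have := hsubP j he
        simpa [fSupp] using this
      linarith [hc ▸ hpos]
    by_contra hemp
    rw [Finset.not_nonempty_iff_eq_empty] at hemp
    have : ∑ e ∈ P j, f' e = 0 := by
      refine Finset.sum_eq_zero fun e he => ?_
      rcases eq_or_lt_of_le ((hf'.1 e).1) with h | h
      · exact h.symm
      · have hemp' : Finset.filter (fun e => 0 < f' e) (P j) = ∅ := hemp
        rw [Finset.filter_eq_empty_iff] at hemp'
        exact absurd h (hemp' he)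
    rw [hsum' j] at this
    linarith
  · intro j k hjk v hv hv'
    refine hdisj j k hjk v ?_ ?_
    · obtain ⟨e, he, hve⟩ := hv
      exact ⟨e, (Finset.mem_filter.mp he).1, hve⟩
    · obtain ⟨e, he, hve⟩ := hv'
      exact ⟨e, (Finset.mem_filter.mp he).1, hve⟩
  · intro j e he
    simp only [Finset.mem_filter] at he
    simp [fSupp, he.2]
  · intro e he
    have hef : e ∈ fSupp f := hsub he
    obtain ⟨j, hj⟩ := hcov e hef
    have : 0 < f' e := by simpa [fSupp] using he
    exact ⟨j, Finset.mem_filter.mpr ⟨hj, this⟩⟩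
  · intro j
    rw [← hsum' j]
    show ∑ e ∈ Finset.filter (fun e => 0 < f' e) (P j), f' e = ∑ e ∈ P j, f' e
    refine Finset.sum_subset (Finset.filter_subset _ _) fun e he hne' => ?_
    rcases eq_or_lt_of_le ((hf'.1 e).1) with h | h
    · exact h.symm
    · exact absurd (Finset.mem_filter.mpr ⟨he, h⟩) hne'
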